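/- Let G_{τ₁,m} and G_{τ₂,m} be isomorphic historical m-hop subgraphs via π with time offset Δ = t' − t, and let the random walk sets S₁ = (S_u,S_v,S_w) within G_{τ₁,m} (M independent length-m annotated temporal random walks from each of (u,t), (v,t), (w,t)) and S₂ = (S_{u'},S_{v'},S_{w'}) within G_{τ₂,m} (from (u',t'), (v',t'), (w',t')) be sampled as above, assuming all encountered candidate sets are nonempty. Fix any vector-valued functions F₁ and F₂ defining the asymmetric distance encoding I. Then for every node a of G_{τ₁,m} and every possible encoding value x, the probability that a appears on some walk of S_u ∪ S_v ∪ S_w and I(a|S_u,S_v,S_w) = x equals the probability that π(a) appears on some walk of S_{u'} ∪ S_{v'} ∪ S_{w'} and I(π(a)|S_{u'},S_{v'},S_{w'}) = x. Consequently, conditioned on the respective appearance events (when they have positive probability), I(a|S_u,S_v,S_w) and I(π(a)|S_{u'},S_{v'},S_{w'}) have the same distribution. -/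

import Mathlib

/-!
STATEMENT 1: Under the same isomorphism setup as Statement 0, for every node a of G_{τ₁,m}
and every encoding value x, the probability that a appears on some walk of
S_u ∪ S_v ∪ S_w and I(a|S_u,S_v,S_w) = x equals the probability that π(a) appears on some
walk of S_{u'} ∪ S_{v'} ∪ S_{w'} and I(π(a)|S_{u'},S_{v'},S_{w'}) = x; consequently,
conditioned on the respective appearance events (when they have positive probability),
the two encodings have the same distribution.
-/

open scoped Classical

namespace HIT

variable {V V' : Type*}

/-- The candidate set `C(z,s)` of temporal hyperedges containing `z` with timestamp before `s`. -/
noncomputable def cand (H : Finset (Finset V × ℝ)) (z : V) (s : ℝ) :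
    Finset (Finset V × ℝ) :=
  H.filter (fun et => z ∈ et.1 ∧ et.2 < s)

/-- The sampling weight `w(e,t;s) = (|e|−1)·exp(α·(s−t))` of a temporal hyperedge. -/
noncomputable def weight (α : ℝ) (s : ℝ) (et : Finset V × ℝ) : ℝ :=
  ((et.1.card : ℝ) - 1) * Real.exp (α * (s - et.2))

/-- An annotated temporal random walk, recorded as the list of steps `((e_l,t_l),z_l)`,
is valid from current node `z` and current time `s` if each hyperedge is a candidate at the
current state and the next node is drawn from the hyperedge minus the current node. -/
def ValidWalk (H : Finset (Finset V × ℝ)) : V → ℝ → List ((Finset V × ℝ) × V) → Prop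
  | _, _, [] => True
  | z, s, (et, z') :: rest =>
      et ∈ H ∧ z ∈ et.1 ∧ et.2 < s ∧ z' ∈ et.1 ∧ z' ≠ z ∧ ValidWalk H z' et.2 rest

/-- The sampling probability `P(W)` of an annotated temporal random walk. -/
noncomputable def walkProb (α : ℝ) (H : Finset (Finset V × ℝ)) :
    V → ℝ → List ((Finset V × ℝ) × V) → ℝ
  | _, _, [] => 1
  | z, s, (et, z') :: rest =>
      (weight α s et / ∑ et' ∈ cand H z s, weight α s et') *
        (1 / ((et.1.card : ℝ) - 1)) * walkProb α H z' et.2 rest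

/-- The state (current node, current time) reached after following a walk. -/
def endState : V → ℝ → List ((Finset V × ℝ) × V) → V × ℝ
  | z, s, [] => (z, s)
  | _, _, (et, z') :: rest => endState z' et.2 rest

/-- The node set of a temporal hypergraph: all nodes covered by its hyperedges. -/
noncomputable def nodes [DecidableEq V] (H : Finset (Finset V × ℝ)) : Finset V :=
  H.biUnion (fun et => et.1)

/-- `π` together with the time offset `Δ` is an isomorphism of temporal hypergraphs from
`H1` to `H2`: `π` is a bijection from the node set of `H1` onto the node set of `H2`, and
`(ẽ,t̃)` is a temporal hyperedge of `H1` iff `(π(ẽ), t̃+Δ)` is a temporal hyperedge of `H2`. -/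
structure IsIso [DecidableEq V] [DecidableEq V'] (π : V → V') (Δ : ℝ)
    (H1 : Finset (Finset V × ℝ)) (H2 : Finset (Finset V' × ℝ)) : Prop where
  injOn : Set.InjOn π (nodes H1 : Set V)
  image_nodes : (nodes H1).image π = nodes H2
  map_mem : ∀ e s, (e, s) ∈ H1 → (e.image π, s + Δ) ∈ H2
  mem_map : ∀ e' s', (e', s') ∈ H2 → ∃ e s, (e, s) ∈ H1 ∧ e' = e.image π ∧ s' = s + Δ

/-- A length-`m` sequence of sampling steps, each step consisting of a temporal hyperedge
of `H` and a next node. -/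
abbrev StepSeq (H : Finset (Finset V × ℝ)) (m : ℕ) := Fin m → ({x // x ∈ H} × V)

/-- Encode a step sequence as a walk (a list of steps). -/
def stepToList {H : Finset (Finset V × ℝ)} {m : ℕ} (f : StepSeq H m) :
    List ((Finset V × ℝ) × V) :=
  List.ofFn fun i => (((f i).1 : Finset V × ℝ), (f i).2)

/-- The probability of sampling a given step sequence as an annotated temporal random walk
starting at `(z0, t0)` (zero if the sequence is not a valid walk). -/
noncomputable def sampleProb (α : ℝ) (H : Finset (Finset V × ℝ)) (z0 : V) (t0 : ℝ)
    {m : ℕ} (f : StepSeq H m) : ℝ :=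
  if ValidWalk H z0 t0 (stepToList f) then walkProb α H z0 t0 (stepToList f) else 0

/-- The node at position `i ∈ {0,…,m}` of a walk given by a step sequence starting at `z0`. -/
def nodeAt {H : Finset (Finset V × ℝ)} {m : ℕ} (z0 : V) (f : StepSeq H m)
    (i : Fin (m + 1)) : V :=
  if h : i = 0 then z0 else (f (i.pred h)).2

/-- An outcome `ω` of the whole sampling experiment consists of `M` step sequences for each
of the three start nodes; the node `a` appears in the sampled walks if it is the node at
some position of some of the `3M` walks. -/
def appearsOn {H : Finset (Finset V × ℝ)} {m M : ℕ} (starts : Fin 3 → V)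
    (ω : Fin 3 → Fin M → StepSeq H m) (a : V) : Prop :=
  ∃ j i p, nodeAt (starts j) (ω j i) p = a

/-- The joint probability of an outcome: the `3M` walks are sampled independently, `M` from
each start node, all with initial time `t0`. -/
noncomputable def jointProb (α : ℝ) (H : Finset (Finset V × ℝ)) (starts : Fin 3 → V)
    (t0 : ℝ) {m M : ℕ} (ω : Fin 3 → Fin M → StepSeq H m) : ℝ :=
  ∏ j, ∏ i, sampleProb α H (starts j) t0 (ω j i)

/-- The probability that the node `a` appears on some walk of `S₁ = S_u ∪ S_v ∪ S_w`. -/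
noncomputable def appearProb [Fintype V] (α : ℝ) (H : Finset (Finset V × ℝ))
    (starts : Fin 3 → V) (t0 : ℝ) (m M : ℕ) (a : V) : ℝ :=
  ∑ ω : Fin 3 → Fin M → StepSeq H m,
    if appearsOn starts ω a then jointProb α H starts t0 ω else 0

/-- The distance encoding `g(a;S_z)` of the node `a` with respect to the sampled set of `M`
walks from the start node `z0`: its `i`-th entry counts the sampled walks whose node at
position `i` is `a`. -/
noncomputable def gSample {H : Finset (Finset V × ℝ)} {m M : ℕ} (z0 : V)
    (ws : Fin M → StepSeq H m) (a : V) : Fin (m + 1) → ℕ :=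
  fun i => (Finset.univ.filter (fun j : Fin M => nodeAt z0 (ws j) i = a)).card

/-- The asymmetric distance encoding `I(a|S_u,S_v,S_w) = F₁((b+c) ⊕ |b−c|)` of the node `a`
with respect to the sampled walk sets, where `b = F₂(g(a;S_u) ⊕ g(a;S_w))`,
`c = F₂(g(a;S_v) ⊕ g(a;S_w))`; concatenation `⊕` is realized by `Sum.elim` and `|·|` is
taken entrywise. -/
noncomputable def sampleDE {d d' m : ℕ}
    (F1 : ((Fin d ⊕ Fin d) → ℝ) → (Fin d' → ℝ))
    (F2 : ((Fin (m + 1) ⊕ Fin (m + 1)) → ℕ) → (Fin d → ℝ))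
    {H : Finset (Finset V × ℝ)} {M : ℕ} (starts : Fin 3 → V)
    (ω : Fin 3 → Fin M → StepSeq H m) (a : V) : Fin d' → ℝ :=
  let b := F2 (Sum.elim (gSample (starts 0) (ω 0) a) (gSample (starts 2) (ω 2) a))
  let c := F2 (Sum.elim (gSample (starts 1) (ω 1) a) (gSample (starts 2) (ω 2) a))
  F1 (Sum.elim (fun j => b j + c j) (fun j => |b j - c j|))

/-- The probability that the node `a` appears on some sampled walk and its asymmetric
distance encoding equals `x`. -/
noncomputable def appearEncProb [Fintype V] (α : ℝ) (H : Finset (Finset V × ℝ))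
    (starts : Fin 3 → V) (t0 : ℝ) (m M : ℕ) {d d' : ℕ}
    (F1 : ((Fin d ⊕ Fin d) → ℝ) → (Fin d' → ℝ))
    (F2 : ((Fin (m + 1) ⊕ Fin (m + 1)) → ℕ) → (Fin d → ℝ))
    (a : V) (x : Fin d' → ℝ) : ℝ :=
  ∑ ω : Fin 3 → Fin M → StepSeq H m,
    if appearsOn starts ω a ∧ sampleDE F1 F2 starts ω a = x
    then jointProb α H starts t0 ω else 0

section Transfer

variable [DecidableEq V] [DecidableEq V'] {π : V → V'} {Δ : ℝ}
  {H1 : Finset (Finset V × ℝ)} {H2 : Finset (Finset V' × ℝ)}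

lemma mem_nodes_of_mem {e : Finset V} {s : ℝ} (h : (e, s) ∈ H1) {z : V} (hz : z ∈ e) :
    z ∈ nodes H1 :=
  Finset.mem_biUnion.2 ⟨(e, s), h, hz⟩

lemma subset_nodes {e : Finset V} {s : ℝ} (h : (e, s) ∈ H1) :
    (e : Set V) ⊆ (nodes H1 : Set V) := fun _ hz => mem_nodes_of_mem h hz

lemma IsIso.card_image (hiso : IsIso π Δ H1 H2) {e : Finset V} {s : ℝ} (he : (e, s) ∈ H1) :
    (e.image π).card = e.card :=
  Finset.card_image_of_injOn (hiso.injOn.mono (subset_nodes he))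

lemma IsIso.mem_image_iff (hiso : IsIso π Δ H1 H2) {e : Finset V} {s : ℝ} (he : (e, s) ∈ H1)
    {z : V} (hz : z ∈ nodes H1) : π z ∈ e.image π ↔ z ∈ e := by
  constructor
  · intro h
    obtain ⟨b, hb, hbz⟩ := Finset.mem_image.1 h
    rwa [hiso.injOn (mem_nodes_of_mem he hb) hz hbz] at hb
  · intro h; exact Finset.mem_image_of_mem _ h

lemma IsIso.image_inj (hiso : IsIso π Δ H1 H2) {e e' : Finset V} {s s' : ℝ}
    (he : (e, s) ∈ H1) (he' : (e', s') ∈ H1) (h : e.image π = e'.image π) : e = e' := by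
  ext z
  constructor
  · intro hz
    have : π z ∈ e'.image π := h ▸ Finset.mem_image_of_mem _ hz
    exact (hiso.mem_image_iff he' (mem_nodes_of_mem he hz)).1 this
  · intro hz
    have : π z ∈ e.image π := h ▸ Finset.mem_image_of_mem _ hz
    exact (hiso.mem_image_iff he (mem_nodes_of_mem he' hz)).1 this

lemma weight_map (hiso : IsIso π Δ H1 H2) {α s : ℝ} {e : Finset V} {sH : ℝ}
    (he : (e, sH) ∈ H1) :
    weight α (s + Δ) (e.image π, sH + Δ) = weight α s (e, sH) := by
  unfold weight
  simp only [hiso.card_image he]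
  ring_nf

lemma cand_image (hiso : IsIso π Δ H1 H2) {z : V} (hz : z ∈ nodes H1) (s : ℝ) :
    cand H2 (π z) (s + Δ) = (cand H1 z s).image (fun et => (et.1.image π, et.2 + Δ)) := by
  ext ⟨e', t''⟩
  simp only [cand, Finset.mem_filter, Finset.mem_image]
  constructor
  · rintro ⟨hmem, hzin, hlt⟩
    obtain ⟨e, sH, heH, rfl, rfl⟩ := hiso.mem_map e' t'' hmem
    refine ⟨(e, sH), ⟨heH, (hiso.mem_image_iff heH hz).1 hzin, by linarith⟩, rfl⟩
  · rintro ⟨⟨e, sH⟩, ⟨hmem, hzin, hlt⟩, heq⟩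
    obtain ⟨rfl, rfl⟩ := Prod.mk.injEq .. ▸ heq
    exact ⟨hiso.map_mem e sH hmem, (hiso.mem_image_iff hmem hz).2 hzin, by linarith⟩

lemma sum_weight_map (hiso : IsIso π Δ H1 H2) {z : V} (hz : z ∈ nodes H1) (α s : ℝ) :
    ∑ et' ∈ cand H2 (π z) (s + Δ), weight α (s + Δ) et' =
      ∑ et ∈ cand H1 z s, weight α s et := by
  rw [cand_image hiso hz, Finset.sum_image]
  · refine Finset.sum_congr rfl fun ⟨e, sH⟩ hmem => ?_
    simp only [cand, Finset.mem_filter] at hmem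
    exact weight_map hiso hmem.1
  · rintro ⟨e, sH⟩ h1 ⟨e', sH'⟩ h2 heq
    simp only [Finset.mem_coe, cand, Finset.mem_filter] at h1 h2
    obtain ⟨h1, -⟩ := h1
    obtain ⟨h2, -⟩ := h2
    obtain ⟨heq1, heq2⟩ := Prod.mk.injEq .. ▸ heq
    exact Prod.ext (hiso.image_inj h1 h2 heq1) (by linarith)

end Transfer
section Walks

variable [DecidableEq V] [DecidableEq V'] {π : V → V'} {Δ : ℝ}
  {H1 : Finset (Finset V × ℝ)} {H2 : Finset (Finset V' × ℝ)}

/-- Push a step forward along `π` with time offset `Δ`. -/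
def plainMap (π : V → V') (Δ : ℝ) (p : (Finset V × ℝ) × V) : (Finset V' × ℝ) × V' :=
  ((p.1.1.image π, p.1.2 + Δ), π p.2)

lemma valid_map (hiso : IsIso π Δ H1 H2) :
    ∀ (L : List ((Finset V × ℝ) × V)) (z0 : V) (s : ℝ), z0 ∈ nodes H1 →
      ValidWalk H1 z0 s L → ValidWalk H2 (π z0) (s + Δ) (L.map (plainMap π Δ))
  | [], _, _, _, _ => trivial
  | ((e, sH), z') :: rest, z0, s, hz0, hv => by
    obtain ⟨hmem, hz0e, hlt, hz'e, hne, hrest⟩ := hv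
    refine ⟨hiso.map_mem e sH hmem, (hiso.mem_image_iff hmem hz0).2 hz0e, by
      simpa using hlt, Finset.mem_image_of_mem _ hz'e, ?_, ?_⟩
    · intro h
      exact hne (hiso.injOn (mem_nodes_of_mem hmem hz'e) hz0 h)
    · exact valid_map hiso rest z' sH (mem_nodes_of_mem hmem hz'e) hrest

lemma walkProb_map (hiso : IsIso π Δ H1 H2) (α : ℝ) :
    ∀ (L : List ((Finset V × ℝ) × V)) (z0 : V) (s : ℝ), z0 ∈ nodes H1 →
      ValidWalk H1 z0 s L →
      walkProb α H2 (π z0) (s + Δ) (L.map (plainMap π Δ)) = walkProb α H1 z0 s L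
  | [], _, _, _, _ => rfl
  | ((e, sH), z') :: rest, z0, s, hz0, hv => by
    obtain ⟨hmem, hz0e, hlt, hz'e, hne, hrest⟩ := hv
    show (weight α (s + Δ) (e.image π, sH + Δ) / _) * (1 / ((e.image π).card - 1 : ℝ)) *
        walkProb α H2 (π z') (sH + Δ) (rest.map (plainMap π Δ)) = _
    rw [weight_map hiso hmem, sum_weight_map hiso hz0 α s, hiso.card_image hmem,
      walkProb_map hiso α rest z' sH (mem_nodes_of_mem hmem hz'e) hrest]
    rfl

end Walks
section Inverse

variable [DecidableEq V] [DecidableEq V'] [Nonempty V] {π : V → V'} {Δ : ℝ}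
  {H1 : Finset (Finset V × ℝ)} {H2 : Finset (Finset V' × ℝ)}

/-- Pull a step back along the partial inverse `ρ` of `π` with time offset `-Δ`. -/
noncomputable def plainInv (ρ : V' → V) (Δ : ℝ) (p : (Finset V' × ℝ) × V') :
    (Finset V × ℝ) × V :=
  ((p.1.1.image ρ, p.1.2 - Δ), ρ p.2)

lemma rho_pi (hiso : IsIso π Δ H1 H2) {z : V} (hz : z ∈ nodes H1) :
    Function.invFunOn π (nodes H1) (π z) = z :=
  hiso.injOn.leftInvOn_invFunOn hz

lemma pi_rho (hiso : IsIso π Δ H1 H2) {y : V'} (hy : y ∈ nodes H2) :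
    π (Function.invFunOn π (nodes H1) y) = y := by
  rw [← hiso.image_nodes] at hy
  obtain ⟨x, hx, rfl⟩ := Finset.mem_image.1 hy
  exact Function.invFunOn_eq ⟨x, hx, rfl⟩

lemma image_rho (hiso : IsIso π Δ H1 H2) {e : Finset V} {s : ℝ} (he : (e, s) ∈ H1) :
    (e.image π).image (Function.invFunOn π (nodes H1)) = e := by
  rw [Finset.image_image]
  have : ∀ z ∈ e, (Function.invFunOn π (nodes H1) ∘ π) z = id z := fun z hz =>
    rho_pi hiso (mem_nodes_of_mem he hz)
  rw [Finset.image_congr this, Finset.image_id]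

lemma rho_image (hiso : IsIso π Δ H1 H2) {e' : Finset V'} {s' : ℝ} (he' : (e', s') ∈ H2) :
    (e'.image (Function.invFunOn π (nodes H1))).image π = e' := by
  rw [Finset.image_image]
  have : ∀ y ∈ e', (π ∘ Function.invFunOn π (nodes H1)) y = id y := fun y hy =>
    pi_rho hiso (mem_nodes_of_mem he' hy)
  rw [Finset.image_congr this, Finset.image_id]

lemma invEdge_mem (hiso : IsIso π Δ H1 H2) {e' : Finset V'} {s' : ℝ} (he' : (e', s') ∈ H2) :
    (e'.image (Function.invFunOn π (nodes H1)), s' - Δ) ∈ H1 := by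
  obtain ⟨e, s, heH, rfl, rfl⟩ := hiso.mem_map e' s' he'
  rw [image_rho hiso heH]
  simpa using heH

lemma valid_inv (hiso : IsIso π Δ H1 H2) :
    ∀ (L' : List ((Finset V' × ℝ) × V')) (z0 : V) (s : ℝ), z0 ∈ nodes H1 →
      ValidWalk H2 (π z0) (s + Δ) L' →
      ValidWalk H1 z0 s (L'.map (plainInv (Function.invFunOn π (nodes H1)) Δ)) ∧
        (L'.map (plainInv (Function.invFunOn π (nodes H1)) Δ)).map (plainMap π Δ) = L'
  | [], _, _, _, _ => ⟨trivial, rfl⟩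
  | ((e', sH'), z') :: rest, z0, s, hz0, hv => by
    obtain ⟨hmem, hz0e, hlt, hz'e, hne, hrest⟩ := hv
    set ρ := Function.invFunOn π (nodes H1) with hρ
    obtain ⟨e, sH, heH, rfl, rfl⟩ := hiso.mem_map e' sH' hmem
    have hz0in : z0 ∈ e := (hiso.mem_image_iff heH hz0).1 hz0e
    obtain ⟨b, hb, rfl⟩ := Finset.mem_image.1 hz'e
    have hbn : b ∈ nodes H1 := mem_nodes_of_mem heH hb
    have hstep : plainInv ρ Δ ((e.image π, sH + Δ), π b) = ((e, sH), b) := by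
      simp only [plainInv, hρ, image_rho hiso heH, rho_pi hiso hbn]
      norm_num
    have hlt' : sH < s := by simp only at hlt; linarith
    have hbz0 : b ≠ z0 := fun h => hne (h ▸ rfl)
    obtain ⟨hvrest, hmaprest⟩ := valid_inv hiso rest b sH hbn hrest
    rw [List.map_cons, hstep]
    refine ⟨⟨heH, hz0in, hlt', hb, hbz0, hvrest⟩, ?_⟩
    rw [List.map_cons, hmaprest]
    simp [plainMap]

end Inverse
section Steps

variable [DecidableEq V] [DecidableEq V'] [Nonempty V] {π : V → V'} {Δ : ℝ}
  {H1 : Finset (Finset V × ℝ)} {H2 : Finset (Finset V' × ℝ)}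

/-- Push a step sequence forward along the isomorphism. -/
noncomputable def stepMap (hiso : IsIso π Δ H1 H2) {m : ℕ} (f : StepSeq H1 m) :
    StepSeq H2 m := fun i =>
  (⟨((f i).1.1.1.image π, (f i).1.1.2 + Δ),
      hiso.map_mem (f i).1.1.1 (f i).1.1.2 (by simpa using (f i).1.2)⟩, π (f i).2)

/-- Pull a step sequence back along the isomorphism. -/
noncomputable def stepInv (hiso : IsIso π Δ H1 H2) {m : ℕ} (f' : StepSeq H2 m) :
    StepSeq H1 m := fun i =>
  (⟨((f' i).1.1.1.image (Function.invFunOn π (nodes H1)), (f' i).1.1.2 - Δ),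
      invEdge_mem hiso (by simpa using (f' i).1.2)⟩,
    Function.invFunOn π (nodes H1) (f' i).2)

lemma stepToList_stepMap (hiso : IsIso π Δ H1 H2) {m : ℕ} (f : StepSeq H1 m) :
    stepToList (stepMap hiso f) = (stepToList f).map (plainMap π Δ) := by
  simp only [stepToList, stepMap, List.map_ofFn]
  rfl

lemma stepToList_stepInv (hiso : IsIso π Δ H1 H2) {m : ℕ} (f' : StepSeq H2 m) :
    stepToList (stepInv hiso f') =
      (stepToList f').map (plainInv (Function.invFunOn π (nodes H1)) Δ) := by
  simp only [stepToList, stepInv, List.map_ofFn]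
  rfl

omit [Nonempty V] in
lemma stepToList_inj {H : Finset (Finset V × ℝ)} {m : ℕ} {f g : StepSeq H m}
    (h : stepToList f = stepToList g) : f = g := by
  simp only [stepToList, List.ofFn_inj] at h
  funext i
  have h0 := congrFun h i
  injection h0 with h1 h2
  exact Prod.ext (Subtype.ext h1) h2

omit [DecidableEq V] [Nonempty V] in
lemma valid_nodeMem {H : Finset (Finset V × ℝ)} :
    ∀ (L : List ((Finset V × ℝ) × V)) (z0 : V) (s : ℝ), ValidWalk H z0 s L →
      ∀ p ∈ L, p.1 ∈ H ∧ p.2 ∈ p.1.1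
  | [], _, _, _, _, hp => absurd hp List.not_mem_nil
  | (et, z') :: rest, z0, s, hv, p, hp => by
    obtain ⟨hmem, _, _, hz'e, _, hrest⟩ := hv
    rcases List.mem_cons.1 hp with rfl | hp
    · exact ⟨hmem, hz'e⟩
    · exact valid_nodeMem rest z' et.2 hrest p hp

omit [Nonempty V] in
lemma step_mem {H : Finset (Finset V × ℝ)} {m : ℕ} {f : StepSeq H m} {z0 : V} {s : ℝ}
    (hv : ValidWalk H z0 s (stepToList f)) (i : Fin m) : (f i).2 ∈ (f i).1.1.1 := by
  have hp : (((f i).1 : Finset V × ℝ), (f i).2) ∈ stepToList f := by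
    simp only [stepToList, List.mem_ofFn]
    exact ⟨i, rfl⟩
  exact (valid_nodeMem _ z0 s hv _ hp).2

lemma stepInv_stepMap (hiso : IsIso π Δ H1 H2) {m : ℕ} {f : StepSeq H1 m} {z0 : V} {s : ℝ}
    (hv : ValidWalk H1 z0 s (stepToList f)) : stepInv hiso (stepMap hiso f) = f := by
  funext i
  have hmem : ((f i).1.1.1, (f i).1.1.2) ∈ H1 := by simpa using (f i).1.2
  have hnode : (f i).2 ∈ nodes H1 := mem_nodes_of_mem hmem (step_mem hv i)
  refine Prod.ext (Subtype.ext ?_) ?_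
  · show (((f i).1.1.1.image π).image _, (f i).1.1.2 + Δ - Δ) = (f i).1.1
    rw [image_rho hiso hmem]
    simp
  · exact rho_pi hiso hnode

lemma stepMap_stepInv (hiso : IsIso π Δ H1 H2) {m : ℕ} {f' : StepSeq H2 m} {z0 : V} {s : ℝ}
    (hz0 : z0 ∈ nodes H1) (hv : ValidWalk H2 (π z0) (s + Δ) (stepToList f')) :
    stepMap hiso (stepInv hiso f') = f' := by
  apply stepToList_inj
  rw [stepToList_stepMap, stepToList_stepInv]
  exact (valid_inv hiso _ z0 s hz0 hv).2

lemma sampleProb_map (hiso : IsIso π Δ H1 H2) (α : ℝ) {m : ℕ} {f : StepSeq H1 m}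
    {z0 : V} {s : ℝ} (hz0 : z0 ∈ nodes H1) (hv : ValidWalk H1 z0 s (stepToList f)) :
    sampleProb α H2 (π z0) (s + Δ) (stepMap hiso f) = sampleProb α H1 z0 s f := by
  have hv2 : ValidWalk H2 (π z0) (s + Δ) (stepToList (stepMap hiso f)) := by
    rw [stepToList_stepMap]; exact valid_map hiso _ z0 s hz0 hv
  rw [sampleProb, sampleProb, if_pos hv, if_pos hv2, stepToList_stepMap]
  exact walkProb_map hiso α _ z0 s hz0 hv

lemma nodeAt_stepMap (hiso : IsIso π Δ H1 H2) {m : ℕ} (f : StepSeq H1 m) (z0 : V)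
    (i : Fin (m + 1)) : nodeAt (π z0) (stepMap hiso f) i = π (nodeAt z0 f i) := by
  by_cases h : i = 0 <;> simp [nodeAt, h, stepMap]

omit [Nonempty V] in
lemma nodeAt_mem_nodes {m : ℕ} {f : StepSeq H1 m} {z0 : V} {s : ℝ}
    (hz0 : z0 ∈ nodes H1) (hv : ValidWalk H1 z0 s (stepToList f)) (i : Fin (m + 1)) :
    nodeAt z0 f i ∈ nodes H1 := by
  by_cases h : i = 0
  · simpa [nodeAt, h] using hz0
  · have hmem : ((f (i.pred h)).1.1.1, (f (i.pred h)).1.1.2) ∈ H1 := by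
      simpa using (f (i.pred h)).1.2
    simpa [nodeAt, h] using mem_nodes_of_mem hmem (step_mem hv (i.pred h))

end Steps
section Outcomes

variable [DecidableEq V] [DecidableEq V'] [Nonempty V] [Fintype V] [Fintype V']
  {π : V → V'} {Δ : ℝ} {H1 : Finset (Finset V × ℝ)} {H2 : Finset (Finset V' × ℝ)}

lemma sum_transfer (hiso : IsIso π Δ H1 H2) (α : ℝ) {m M : ℕ}
    (g : Fin 3 → V) (hg : ∀ j, g j ∈ nodes H1) (t : ℝ)
    (Q1 : (Fin 3 → Fin M → StepSeq H1 m) → Prop)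
    (Q2 : (Fin 3 → Fin M → StepSeq H2 m) → Prop)
    (hQ : ∀ ω, (∀ j i, ValidWalk H1 (g j) t (stepToList (ω j i))) →
      (Q1 ω ↔ Q2 (fun j i => stepMap hiso (ω j i)))) :
    (∑ ω : Fin 3 → Fin M → StepSeq H1 m,
        if Q1 ω then jointProb α H1 g t ω else 0) =
      ∑ ω' : Fin 3 → Fin M → StepSeq H2 m,
        if Q2 ω' then jointProb α H2 (π ∘ g) (t + Δ) ω' else 0 := by
  have support1 : ∀ ω ∈ (Finset.univ : Finset (Fin 3 → Fin M → StepSeq H1 m)),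
      (if Q1 ω then jointProb α H1 g t ω else 0) ≠ 0 →
      ∀ j i, ValidWalk H1 (g j) t (stepToList (ω j i)) := by
    intro ω _ hne j i
    by_contra hval
    apply hne
    have h0 : sampleProb α H1 (g j) t (ω j i) = 0 := if_neg hval
    have hj : jointProb α H1 g t ω = 0 :=
      Finset.prod_eq_zero (Finset.mem_univ j) (Finset.prod_eq_zero (Finset.mem_univ i) h0)
    simp [hj]
  have support2 : ∀ ω' ∈ (Finset.univ : Finset (Fin 3 → Fin M → StepSeq H2 m)),
      (if Q2 ω' then jointProb α H2 (π ∘ g) (t + Δ) ω' else 0) ≠ 0 →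
      ∀ j i, ValidWalk H2 (π (g j)) (t + Δ) (stepToList (ω' j i)) := by
    intro ω' _ hne j i
    by_contra hval
    apply hne
    have h0 : sampleProb α H2 (π (g j)) (t + Δ) (ω' j i) = 0 := if_neg hval
    have hj : jointProb α H2 (π ∘ g) (t + Δ) ω' = 0 :=
      Finset.prod_eq_zero (Finset.mem_univ j) (Finset.prod_eq_zero (Finset.mem_univ i) h0)
    simp [hj]
  rw [← Finset.sum_filter_of_ne support1, ← Finset.sum_filter_of_ne support2]
  refine Finset.sum_nbij' (fun ω => fun j i => stepMap hiso (ω j i))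
    (fun ω' => fun j i => stepInv hiso (ω' j i)) ?_ ?_ ?_ ?_ ?_
  · intro ω hω
    simp only [Finset.mem_filter, Finset.mem_univ, true_and] at hω ⊢
    intro j i
    rw [stepToList_stepMap]
    exact valid_map hiso _ _ t (hg j) (hω j i)
  · intro ω' hω'
    simp only [Finset.mem_filter, Finset.mem_univ, true_and] at hω' ⊢
    intro j i
    rw [stepToList_stepInv]
    exact (valid_inv hiso _ (g j) t (hg j) (hω' j i)).1
  · intro ω hω
    simp only [Finset.mem_filter, Finset.mem_univ, true_and] at hω
    funext j i
    exact stepInv_stepMap hiso (hω j i)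
  · intro ω' hω'
    simp only [Finset.mem_filter, Finset.mem_univ, true_and] at hω'
    funext j i
    exact stepMap_stepInv hiso (hg j) (hω' j i)
  · intro ω hω
    simp only [Finset.mem_filter, Finset.mem_univ, true_and] at hω
    refine if_congr (hQ ω hω) ?_ rfl
    unfold jointProb
    refine Finset.prod_congr rfl fun j _ => Finset.prod_congr rfl fun i _ => ?_
    exact (sampleProb_map hiso α (hg j) (hω j i)).symm

lemma appearsOn_stepMap (hiso : IsIso π Δ H1 H2) {m M : ℕ}
    (g : Fin 3 → V) (hg : ∀ j, g j ∈ nodes H1) {t : ℝ}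
    {ω : Fin 3 → Fin M → StepSeq H1 m}
    (hω : ∀ j i, ValidWalk H1 (g j) t (stepToList (ω j i)))
    {a : V} (ha : a ∈ nodes H1) :
    appearsOn (π ∘ g) (fun j i => stepMap hiso (ω j i)) (π a) ↔ appearsOn g ω a := by
  unfold appearsOn
  refine exists_congr fun j => exists_congr fun i => exists_congr fun p => ?_
  rw [Function.comp_apply, nodeAt_stepMap]
  constructor
  · intro h
    exact hiso.injOn (nodeAt_mem_nodes (hg j) (hω j i) p) ha h
  · intro h; rw [h]

lemma gSample_stepMap (hiso : IsIso π Δ H1 H2) {m M : ℕ}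
    {z0 : V} (hz0 : z0 ∈ nodes H1) {t : ℝ} {ws : Fin M → StepSeq H1 m}
    (hws : ∀ i, ValidWalk H1 z0 t (stepToList (ws i)))
    {a : V} (ha : a ∈ nodes H1) :
    gSample (π z0) (fun i => stepMap hiso (ws i)) (π a) = gSample z0 ws a := by
  funext p
  unfold gSample
  congr 1
  ext i
  simp only [Finset.mem_filter, Finset.mem_univ, true_and]
  rw [nodeAt_stepMap]
  constructor
  · intro h
    exact hiso.injOn (nodeAt_mem_nodes hz0 (hws i) p) ha h
  · intro h; rw [h]

lemma sampleDE_stepMap (hiso : IsIso π Δ H1 H2) {m M : ℕ} {d d' : ℕ}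
    (F1 : ((Fin d ⊕ Fin d) → ℝ) → (Fin d' → ℝ))
    (F2 : ((Fin (m + 1) ⊕ Fin (m + 1)) → ℕ) → (Fin d → ℝ))
    (g : Fin 3 → V) (hg : ∀ j, g j ∈ nodes H1) {t : ℝ}
    {ω : Fin 3 → Fin M → StepSeq H1 m}
    (hω : ∀ j i, ValidWalk H1 (g j) t (stepToList (ω j i)))
    {a : V} (ha : a ∈ nodes H1) :
    sampleDE F1 F2 (π ∘ g) (fun j i => stepMap hiso (ω j i)) (π a) =
      sampleDE F1 F2 g ω a := by
  unfold sampleDE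
  rw [show (π ∘ g) 0 = π (g 0) from rfl, show (π ∘ g) 1 = π (g 1) from rfl,
    show (π ∘ g) 2 = π (g 2) from rfl,
    gSample_stepMap hiso (hg 0) (hω 0) ha, gSample_stepMap hiso (hg 1) (hω 1) ha,
    gSample_stepMap hiso (hg 2) (hω 2) ha]

lemma appearProb_map (hiso : IsIso π Δ H1 H2) (α : ℝ) {m M : ℕ}
    (g : Fin 3 → V) (hg : ∀ j, g j ∈ nodes H1) (t : ℝ) {a : V} (ha : a ∈ nodes H1) :
    appearProb α H1 g t m M a = appearProb α H2 (π ∘ g) (t + Δ) m M (π a) := by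
  unfold appearProb
  exact sum_transfer hiso α g hg t (fun ω => appearsOn g ω a)
    (fun ω' => appearsOn (π ∘ g) ω' (π a))
    fun ω hω => (appearsOn_stepMap hiso g hg hω ha).symm

lemma appearEncProb_map (hiso : IsIso π Δ H1 H2) (α : ℝ) {m M : ℕ} {d d' : ℕ}
    (F1 : ((Fin d ⊕ Fin d) → ℝ) → (Fin d' → ℝ))
    (F2 : ((Fin (m + 1) ⊕ Fin (m + 1)) → ℕ) → (Fin d → ℝ))
    (g : Fin 3 → V) (hg : ∀ j, g j ∈ nodes H1) (t : ℝ) {a : V} (ha : a ∈ nodes H1)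
    (x : Fin d' → ℝ) :
    appearEncProb α H1 g t m M F1 F2 a x =
      appearEncProb α H2 (π ∘ g) (t + Δ) m M F1 F2 (π a) x := by
  unfold appearEncProb
  have h := sum_transfer (m := m) (M := M) hiso α g hg t
    (fun ω => appearsOn g ω a ∧ sampleDE F1 F2 g ω a = x)
    (fun ω' => appearsOn (π ∘ g) ω' (π a) ∧ sampleDE F1 F2 (π ∘ g) ω' (π a) = x)
    (fun ω hω => by
      beta_reduce
      rw [appearsOn_stepMap hiso g hg hω ha, sampleDE_stepMap hiso F1 F2 g hg hω ha])
  refine Eq.trans (Finset.sum_congr rfl fun ω _ => ?_) (h.trans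
    (Finset.sum_congr rfl fun ω _ => ?_)) <;> congr

end Outcomes
section Swap

variable [DecidableEq V] [Fintype V]

/-- The involution on `Fin 3` swapping the first two indices. -/
def sw : Fin 3 → Fin 3 := ![1, 0, 2]

lemma sw_sw : ∀ j, sw (sw j) = j := by decide

lemma swapOutcome_bijective {β : Type*} :
    Function.Bijective (fun (ω : Fin 3 → β) => fun j => ω (sw j)) := by
  have : Function.Involutive (fun (ω : Fin 3 → β) => fun j => ω (sw j)) := by
    intro ω; funext j; simp [sw_sw j]
  exact this.bijective

lemma jointProb_swap (α : ℝ) (H : Finset (Finset V × ℝ)) (g : Fin 3 → V) (t : ℝ)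
    {m M : ℕ} (ω : Fin 3 → Fin M → StepSeq H m) :
    jointProb α H (fun j => g (sw j)) t (fun j => ω (sw j)) = jointProb α H g t ω := by
  unfold jointProb
  refine Fintype.prod_equiv ⟨sw, sw, sw_sw, sw_sw⟩ _ _ fun j => ?_
  simp [sw_sw j]

lemma appearsOn_swap {H : Finset (Finset V × ℝ)} {m M : ℕ} (g : Fin 3 → V)
    (ω : Fin 3 → Fin M → StepSeq H m) (a : V) :
    appearsOn (fun j => g (sw j)) (fun j => ω (sw j)) a ↔ appearsOn g ω a := by
  unfold appearsOn
  constructor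
  · rintro ⟨j, i, p, h⟩; exact ⟨sw j, i, p, h⟩
  · rintro ⟨j, i, p, h⟩
    exact ⟨sw j, i, p, by simpa [sw_sw j] using h⟩

lemma sampleDE_swap {H : Finset (Finset V × ℝ)} {m M : ℕ} {d d' : ℕ}
    (F1 : ((Fin d ⊕ Fin d) → ℝ) → (Fin d' → ℝ))
    (F2 : ((Fin (m + 1) ⊕ Fin (m + 1)) → ℕ) → (Fin d → ℝ))
    (g : Fin 3 → V) (ω : Fin 3 → Fin M → StepSeq H m) (a : V) :
    sampleDE F1 F2 (fun j => g (sw j)) (fun j => ω (sw j)) a =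
      sampleDE F1 F2 g ω a := by
  unfold sampleDE
  have h0 : sw 0 = 1 := rfl
  have h1 : sw 1 = 0 := rfl
  have h2 : sw 2 = 2 := rfl
  simp only [h0, h1, h2]
  refine congrArg F1 (funext fun j => ?_)
  cases j with
  | inl j => exact add_comm _ _
  | inr j => exact abs_sub_comm _ _

lemma appearProb_swap (α : ℝ) (H : Finset (Finset V × ℝ)) (g : Fin 3 → V) (t : ℝ)
    (m M : ℕ) (a : V) :
    appearProb α H g t m M a = appearProb α H (fun j => g (sw j)) t m M a := by
  unfold appearProb
  refine Fintype.sum_bijective _ swapOutcome_bijective _ _ fun ω => ?_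
  beta_reduce
  rw [jointProb_swap α H g t ω, appearsOn_swap g ω a]

lemma appearEncProb_swap (α : ℝ) (H : Finset (Finset V × ℝ)) (g : Fin 3 → V) (t : ℝ)
    (m M : ℕ) {d d' : ℕ}
    (F1 : ((Fin d ⊕ Fin d) → ℝ) → (Fin d' → ℝ))
    (F2 : ((Fin (m + 1) ⊕ Fin (m + 1)) → ℕ) → (Fin d → ℝ))
    (a : V) (x : Fin d' → ℝ) :
    appearEncProb α H g t m M F1 F2 a x =
      appearEncProb α H (fun j => g (sw j)) t m M F1 F2 a x := by
  unfold appearEncProb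
  refine Fintype.sum_bijective _ swapOutcome_bijective _ _ fun ω => ?_
  beta_reduce
  rw [jointProb_swap α H g t ω, appearsOn_swap g ω a, sampleDE_swap F1 F2 g ω a]

end Swap
theorem de_distribution_eq_of_iso [Fintype V] [Fintype V'] [DecidableEq V] [DecidableEq V']
    (H1 : Finset (Finset V × ℝ)) (H2 : Finset (Finset V' × ℝ))
    (hcard1 : ∀ et ∈ H1, 2 ≤ et.1.card) (hcard2 : ∀ et ∈ H2, 2 ≤ et.1.card)
    (α : ℝ) (hα : 0 ≤ α) (m M : ℕ) {d d' : ℕ}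
    (F1 : ((Fin d ⊕ Fin d) → ℝ) → (Fin d' → ℝ))
    (F2 : ((Fin (m + 1) ⊕ Fin (m + 1)) → ℕ) → (Fin d → ℝ))
    (u v w : V) (u' v' w' : V') (t t' : ℝ) (π : V → V') (Δ : ℝ) (hΔ : Δ = t' - t)
    (hiso : IsIso π Δ H1 H2)
    (hUV : ({π u, π v} : Finset V') = {u', v'}) (hW : π w = w')
    (hreach : ∀ z0, (z0 = u ∨ z0 = v ∨ z0 = w) →
      ∀ L : List ((Finset V × ℝ) × V), L.length ≤ m → ValidWalk H1 z0 t L →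
        (cand H1 (endState z0 t L).1 (endState z0 t L).2).Nonempty)
    (a : V) (ha : a ∈ nodes H1) :
    (∀ x : Fin d' → ℝ,
      appearEncProb α H1 ![u, v, w] t m M F1 F2 a x =
        appearEncProb α H2 ![u', v', w'] t' m M F1 F2 (π a) x) ∧
    (0 < appearProb α H1 ![u, v, w] t m M a →
      0 < appearProb α H2 ![u', v', w'] t' m M (π a) →
      ∀ x : Fin d' → ℝ,
        appearEncProb α H1 ![u, v, w] t m M F1 F2 a x /
            appearProb α H1 ![u, v, w] t m M a =
          appearEncProb α H2 ![u', v', w'] t' m M F1 F2 (π a) x /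
            appearProb α H2 ![u', v', w'] t' m M (π a)) := by
  have hne : Nonempty V := ⟨a⟩
  have ht' : t + Δ = t' := by rw [hΔ]; ring
  have hmemstart : ∀ z0, (z0 = u ∨ z0 = v ∨ z0 = w) → z0 ∈ nodes H1 := by
    intro z0 hz0
    have h := hreach z0 hz0 [] (by simp) trivial
    obtain ⟨⟨e, s⟩, hmem⟩ := h
    unfold cand at hmem
    have hmem'' : (e, s) ∈ H1.filter (fun et => z0 ∈ et.1 ∧ et.2 < t) := by convert hmem <;> rfl
    have hmem' := Finset.mem_filter.1 hmem''
    exact mem_nodes_of_mem hmem'.1 hmem'.2.1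
  have hu : u ∈ nodes H1 := hmemstart u (Or.inl rfl)
  have hv : v ∈ nodes H1 := hmemstart v (Or.inr (Or.inl rfl))
  have hw : w ∈ nodes H1 := hmemstart w (Or.inr (Or.inr rfl))
  have hg1 : ∀ j : Fin 3, (![u, v, w] : Fin 3 → V) j ∈ nodes H1 := by
    intro j; fin_cases j <;> assumption
  have hg2 : ∀ j : Fin 3, (![v, u, w] : Fin 3 → V) j ∈ nodes H1 := by
    intro j; fin_cases j <;> assumption
  have hcase : (π u = u' ∧ π v = v') ∨ (π u = v' ∧ π v = u') := by
    have h1 : π u = u' ∨ π u = v' := by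
      have : π u ∈ ({u', v'} : Finset V') := by
        rw [← hUV]; exact Finset.mem_insert_self _ _
      simpa using this
    have h2 : π v = u' ∨ π v = v' := by
      have : π v ∈ ({u', v'} : Finset V') := by rw [← hUV]; simp
      simpa using this
    have h3 : v' = π u ∨ v' = π v := by
      have : v' ∈ ({π u, π v} : Finset V') := by rw [hUV]; simp
      simpa using this
    have h4 : u' = π u ∨ u' = π v := by
      have : u' ∈ ({π u, π v} : Finset V') := by rw [hUV]; simp
      simpa using this
    rcases h1 with h1 | h1
    · refine Or.inl ⟨h1, ?_⟩
      rcases h2 with h2 | h2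
      · rcases h3 with h3 | h3
        · exact h2.trans (h3.trans h1).symm
        · exact h3.symm
      · exact h2
    · refine Or.inr ⟨h1, ?_⟩
      rcases h2 with h2 | h2
      · exact h2
      · rcases h4 with h4 | h4
        · exact h2.trans (h4.trans h1).symm
        · exact h4.symm
  obtain ⟨E1, E2⟩ : (∀ x, appearEncProb α H1 ![u, v, w] t m M F1 F2 a x =
        appearEncProb α H2 ![u', v', w'] t' m M F1 F2 (π a) x) ∧
      appearProb α H1 ![u, v, w] t m M a =
        appearProb α H2 ![u', v', w'] t' m M (π a) := by
    rcases hcase with ⟨h1, h2⟩ | ⟨h1, h2⟩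
    · have hst : (![u', v', w'] : Fin 3 → V') = π ∘ ![u, v, w] := by
        funext j; fin_cases j <;> simp [h1, h2, hW]
      constructor
      · intro x
        rw [hst, ← ht']
        exact appearEncProb_map hiso α F1 F2 ![u, v, w] hg1 t ha x
      · rw [hst, ← ht']
        exact appearProb_map hiso α ![u, v, w] hg1 t ha
    · have hst : (![u', v', w'] : Fin 3 → V') = π ∘ ![v, u, w] := by
        funext j; fin_cases j <;> simp [h1, h2, hW]
      have hswap : (fun j => (![u, v, w] : Fin 3 → V) (sw j)) = ![v, u, w] := by
        funext j; fin_cases j <;> rfl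
      constructor
      · intro x
        rw [appearEncProb_swap α H1 ![u, v, w] t m M F1 F2 a x, hswap, hst, ← ht']
        exact appearEncProb_map hiso α F1 F2 ![v, u, w] hg2 t ha x
      · rw [appearProb_swap α H1 ![u, v, w] t m M a, hswap, hst, ← ht']
        exact appearProb_map hiso α ![v, u, w] hg2 t ha
  exact ⟨E1, fun _ _ x => by rw [E1 x, E2]⟩

end HIT
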